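/- Let R be a local ring (not necessarily commutative) such that every right singular 2×2 matrix over R (every A ∈ M₂(R) for which there exists B ∈ M₂(R), B ≠ 0, with A·B = 0) is a product of idempotent matrices. Then R is a domain: for all a, b ∈ R, a·b = 0 implies a = 0 or b = 0. -/

import Mathlib

section LocalAux

variable {R : Type*} [Ring R] [Nontrivial R]

private theorem loc_idem (hloc : ∀ a b : R, a + b = 1 → IsUnit a ∨ IsUnit b)
    {d : R} (hd : d * d = d) : d = 0 ∨ d = 1 := by
  rcases hloc d (1 - d) (by abel) with hu | hu
  · exact Or.inr (hu.mul_left_cancel (by rw [hd, mul_one]))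
  · refine Or.inl ?_
    have h2 : (1 - d) * (1 - d) = (1 - d) * 1 := by
      have hx : (1 - d) * (1 - d) = 1 - d - d + d * d := by noncomm_ring
      rw [hx, hd]; noncomm_ring
    have h3 := hu.mul_left_cancel h2
    exact sub_eq_self.mp h3

private theorem loc_inv_comm (hloc : ∀ a b : R, a + b = 1 → IsUnit a ∨ IsUnit b)
    {x y : R} (h : x * y = 1) : y * x = 1 := by
  have hi : (y * x) * (y * x) = y * x := by
    calc (y * x) * (y * x) = y * ((x * y) * x) := by noncomm_ring
      _ = y * x := by rw [h, one_mul]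
  rcases loc_idem hloc hi with h0 | h1
  · exfalso
    have h2 : (1 : R) = 0 := by
      calc (1 : R) = (x * y) * (x * y) := by rw [h, one_mul]
        _ = x * ((y * x) * y) := by noncomm_ring
        _ = 0 := by rw [h0, zero_mul, mul_zero]
    exact one_ne_zero h2
  · exact h1

private theorem loc_unit_left (hloc : ∀ a b : R, a + b = 1 → IsUnit a ∨ IsUnit b)
    {x y : R} (h : IsUnit (x * y)) : IsUnit x := by
  obtain ⟨u, hu⟩ := h
  have hx1 : x * (y * ↑u⁻¹) = 1 := by rw [← mul_assoc, ← hu, u.mul_inv]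
  exact ⟨⟨x, y * ↑u⁻¹, hx1, loc_inv_comm hloc hx1⟩, rfl⟩

private theorem loc_unit_right (hloc : ∀ a b : R, a + b = 1 → IsUnit a ∨ IsUnit b)
    {x y : R} (h : IsUnit (x * y)) : IsUnit y := by
  obtain ⟨u, hu⟩ := h
  have hy1 : (↑u⁻¹ * x) * y = 1 := by rw [mul_assoc, ← hu, u.inv_mul]
  exact ⟨⟨y, ↑u⁻¹ * x, loc_inv_comm hloc hy1, hy1⟩, rfl⟩

/-- Core scalar lemma: for an idempotent 2×2 matrix with entries `e f g h` whose
`(0,0)` entry `e` is a unit, the matrix is `1` or rank one. -/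
private theorem core (hloc : ∀ a b : R, a + b = 1 → IsUnit a ∨ IsUnit b)
    {e f g h e' : R}
    (he1 : e' * e = 1) (he2 : e * e' = 1)
    (q1 : e * e + f * g = e) (q2 : e * f + f * h = f)
    (q3 : g * e + h * g = g) (q4 : g * f + h * h = h) :
    (e = 1 ∧ f = 0 ∧ g = 0 ∧ h = 1) ∨
    ∃ c0 c1 r0 r1 : R, e = c0 * r0 ∧ f = c0 * r1 ∧ g = c1 * r0 ∧ h = c1 * r1 := by
  have ce : ∀ x : R, e' * (e * x) = x := fun x => by rw [← mul_assoc, he1, one_mul]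
  have ce' : ∀ x : R, e * (e' * x) = x := fun x => by rw [← mul_assoc, he2, one_mul]
  have hh : h * h = h - g * f := eq_sub_of_add_eq' q4
  have hgg : h * g = g - g * e := eq_sub_of_add_eq' q3
  have fh : f * h = f - e * f := eq_sub_of_add_eq' q2
  have fg : f * g = e - e * e := eq_sub_of_add_eq' q1
  have hd : (h - g * (e' * f)) * (h - g * (e' * f)) = h - g * (e' * f) := by
    calc (h - g * (e' * f)) * (h - g * (e' * f))
        = h * h - (h * g) * (e' * f) - g * (e' * (f * h)) + g * (e' * ((f * g) * (e' * f))) := by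
          noncomm_ring
      _ = (h - g * f) - (g - g * e) * (e' * f) - g * (e' * (f - e * f))
            + g * (e' * ((e - e * e) * (e' * f))) := by rw [hh, hgg, fh, fg]
      _ = h - g * (e' * f) := by
          have t0 : (g * e) * (e' * f) = g * f := by rw [mul_assoc, ce']
          have t1 : (g - g * e) * (e' * f) = g * (e' * f) - g * f := by rw [sub_mul, t0]
          have t2 : e' * (f - e * f) = e' * f - f := by rw [mul_sub, ce]
          have t3 : (e - e * e) * (e' * f) = f - e * f := by
            rw [sub_mul, ce', mul_assoc, ce']
          rw [t1, t3, t2]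
          noncomm_ring
  rcases loc_idem hloc hd with h0 | h1
  · have hh' : h = g * (e' * f) := by rwa [sub_eq_zero] at h0
    exact Or.inr ⟨e, g, 1, e' * f, (mul_one e).symm, (ce' f).symm, (mul_one g).symm, hh'⟩
  · left
    have hh1 : h = 1 + g * (e' * f) := sub_eq_iff_eq_add.mp h1
    have hg0 : g = 0 := by
      have h4 : g * e + g + g * (e' * (f * g)) = g := by
        calc g * e + g + g * (e' * (f * g)) = g * e + (1 + g * (e' * f)) * g := by noncomm_ring
          _ = g * e + h * g := by rw [← hh1]
          _ = g := q3
      have h5 : e' * (f * g) = 1 - e := by rw [fg, mul_sub, he1, ce]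
      have h6 : g * (e' * (f * g)) = g - g * e := by rw [h5, mul_sub, mul_one]
      rw [h6] at h4
      have h7 : g + g = g := by
        calc g + g = g * e + g + (g - g * e) := by abel
          _ = g := h4
      have h8 : g + g = g + 0 := by rw [add_zero]; exact h7
      exact add_left_cancel h8
    have hhh : h = 1 := by rw [hh1, hg0, zero_mul, add_zero]
    have hf0 : f = 0 := by
      have h9 : e * f + f = f := by have := q2; rwa [hhh, mul_one] at this
      have h10 : e * f = 0 := by
        have h11 : e * f + f = 0 + f := by rw [zero_add]; exact h9
        exact add_right_cancel h11
      have h12 := ce f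
      rw [h10, mul_zero] at h12
      exact h12.symm
    have heq : e = 1 := by
      have h11 : e * e = e := by have := q1; rwa [hf0, zero_mul, add_zero] at this
      calc e = e' * (e * e) := (ce e).symm
        _ = e' * e := by rw [h11]
        _ = 1 := he1
    exact ⟨heq, hf0, hg0, hhh⟩

/-- Every idempotent 2×2 matrix over a local ring is `1` or rank one. -/
private theorem idem_struct (hloc : ∀ a b : R, a + b = 1 → IsUnit a ∨ IsUnit b)
    (E : Matrix (Fin 2) (Fin 2) R) (hE : E * E = E) :
    E = 1 ∨ ∃ c r : Fin 2 → R, ∀ i j, E i j = c i * r j := by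
  have q : ∀ i j, E i 0 * E 0 j + E i 1 * E 1 j = E i j := fun i j => by
    have := congrFun (congrFun hE i) j
    rwa [Matrix.mul_apply, Fin.sum_univ_two] at this
  by_cases he : IsUnit (E 0 0)
  · obtain ⟨u, hu⟩ := he
    have he1 : (↑u⁻¹ : R) * E 0 0 = 1 := by rw [← hu]; exact u.inv_mul
    have he2 : E 0 0 * (↑u⁻¹ : R) = 1 := by rw [← hu]; exact u.mul_inv
    rcases core hloc he1 he2 (q 0 0) (q 0 1) (q 1 0) (q 1 1) with
      ⟨a1, a2, a3, a4⟩ | ⟨c0, c1, r0, r1, b1, b2, b3, b4⟩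
    · left; ext i j; fin_cases i <;> fin_cases j <;>
        simp [Matrix.one_apply, a1, a2, a3, a4]
    · right
      refine ⟨![c0, c1], ![r0, r1], fun i j => ?_⟩
      fin_cases i <;> fin_cases j <;> simp <;>
        first | exact b1 | exact b2 | exact b3 | exact b4
  · by_cases hh : IsUnit (E 1 1)
    · obtain ⟨u, hu⟩ := hh
      have he1 : (↑u⁻¹ : R) * E 1 1 = 1 := by rw [← hu]; exact u.inv_mul
      have he2 : E 1 1 * (↑u⁻¹ : R) = 1 := by rw [← hu]; exact u.mul_inv
      have q1' : E 1 1 * E 1 1 + E 1 0 * E 0 1 = E 1 1 := by rw [add_comm]; exact q 1 1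
      have q2' : E 1 1 * E 1 0 + E 1 0 * E 0 0 = E 1 0 := by rw [add_comm]; exact q 1 0
      have q3' : E 0 1 * E 1 1 + E 0 0 * E 0 1 = E 0 1 := by rw [add_comm]; exact q 0 1
      have q4' : E 0 1 * E 1 0 + E 0 0 * E 0 0 = E 0 0 := by rw [add_comm]; exact q 0 0
      rcases core hloc he1 he2 q1' q2' q3' q4' with
        ⟨a1, a2, a3, a4⟩ | ⟨c0, c1, r0, r1, b1, b2, b3, b4⟩
      · left; ext i j; fin_cases i <;> fin_cases j <;>
          simp [Matrix.one_apply, a1, a2, a3, a4]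
      · right
        refine ⟨![c1, c0], ![r1, r0], fun i j => ?_⟩
        fin_cases i <;> fin_cases j <;> simp <;>
          first | exact b1 | exact b2 | exact b3 | exact b4
    · have hu_e : IsUnit (1 - E 0 0) := by
        rcases hloc (E 0 0) (1 - E 0 0) (by abel) with h1 | h1
        · exact absurd h1 he
        · exact h1
      have hu_h : IsUnit (1 - E 1 1) := by
        rcases hloc (E 1 1) (1 - E 1 1) (by abel) with h1 | h1
        · exact absurd h1 hh
        · exact h1
      obtain ⟨u, hu⟩ := hu_e
      have he1 : (↑u⁻¹ : R) * (1 - E 0 0) = 1 := by rw [← hu]; exact u.inv_mul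
      have he2 : (1 - E 0 0) * (↑u⁻¹ : R) = 1 := by rw [← hu]; exact u.mul_inv
      have Q1 : (1 - E 0 0) * (1 - E 0 0) + (-(E 0 1)) * (-(E 1 0)) = 1 - E 0 0 := by
        calc (1 - E 0 0) * (1 - E 0 0) + (-(E 0 1)) * (-(E 1 0))
            = 1 - E 0 0 - E 0 0 + (E 0 0 * E 0 0 + E 0 1 * E 1 0) := by noncomm_ring
          _ = 1 - E 0 0 := by rw [q 0 0]; noncomm_ring
      have Q2 : (1 - E 0 0) * (-(E 0 1)) + (-(E 0 1)) * (1 - E 1 1) = -(E 0 1) := by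
        calc (1 - E 0 0) * (-(E 0 1)) + (-(E 0 1)) * (1 - E 1 1)
            = -(E 0 1) - E 0 1 + (E 0 0 * E 0 1 + E 0 1 * E 1 1) := by noncomm_ring
          _ = -(E 0 1) := by rw [q 0 1]; noncomm_ring
      have Q3 : (-(E 1 0)) * (1 - E 0 0) + (1 - E 1 1) * (-(E 1 0)) = -(E 1 0) := by
        calc (-(E 1 0)) * (1 - E 0 0) + (1 - E 1 1) * (-(E 1 0))
            = -(E 1 0) - E 1 0 + (E 1 0 * E 0 0 + E 1 1 * E 1 0) := by noncomm_ring
          _ = -(E 1 0) := by rw [q 1 0]; noncomm_ring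
      have Q4 : (-(E 1 0)) * (-(E 0 1)) + (1 - E 1 1) * (1 - E 1 1) = 1 - E 1 1 := by
        calc (-(E 1 0)) * (-(E 0 1)) + (1 - E 1 1) * (1 - E 1 1)
            = 1 - E 1 1 - E 1 1 + (E 1 0 * E 0 1 + E 1 1 * E 1 1) := by noncomm_ring
          _ = 1 - E 1 1 := by rw [q 1 1]; noncomm_ring
      rcases core hloc he1 he2 Q1 Q2 Q3 Q4 with
        ⟨a1, a2, a3, a4⟩ | ⟨c0, c1, r0, r1, b1, b2, b3, b4⟩
      · -- E = 0, hence rank one (with zero vectors)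
        right
        have z00 : E 0 0 = 0 := sub_eq_self.mp a1
        have z01 : E 0 1 = 0 := neg_eq_zero.mp a2
        have z10 : E 1 0 = 0 := neg_eq_zero.mp a3
        have z11 : E 1 1 = 0 := sub_eq_self.mp a4
        refine ⟨fun _ => 0, fun _ => 0, fun i j => ?_⟩
        fin_cases i <;> fin_cases j <;> simp <;>
          first | exact z00 | exact z01 | exact z10 | exact z11
      · -- contradiction: would force E 1 1 or E 0 0 to be a unit
        exfalso
        have hue : IsUnit (c0 * r0) := b1 ▸ (⟨u, hu⟩ : IsUnit (1 - E 0 0))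
        have hr0 : IsUnit r0 := loc_unit_right hloc hue
        have huh : IsUnit (c1 * r1) := b4 ▸ hu_h
        have hc1 : IsUnit c1 := loc_unit_left hloc huh
        have hneg : IsUnit (-(E 1 0)) := b3 ▸ hc1.mul hr0
        have hg : IsUnit (E 1 0) := by
          have := hneg.neg
          rwa [neg_neg] at this
        obtain ⟨v, hv⟩ := hg
        have k1 : (↑v⁻¹ : R) * (E 1 0 * E 0 0) = E 0 0 := by
          rw [← mul_assoc, ← hv, v.inv_mul, one_mul]
        have k2 : (↑v⁻¹ : R) * E 1 0 = 1 := by rw [← hv]; exact v.inv_mul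
        have hsum : E 0 0 + (↑v⁻¹ : R) * (E 1 1 * E 1 0) = 1 := by
          rw [← k1, ← mul_add, q 1 0, k2]
        rcases hloc _ _ hsum with h1 | h2
        · exact he h1
        · exact hh (loc_unit_left hloc (loc_unit_right hloc h2))

private theorem prod_struct (hloc : ∀ a b : R, a + b = 1 → IsUnit a ∨ IsUnit b) :
    ∀ l : List (Matrix (Fin 2) (Fin 2) R),
      (∀ E ∈ l, E * E = E) →
      l.prod = 1 ∨ ∃ c r : Fin 2 → R, ∀ i j, l.prod i j = c i * r j := by
  intro l
  induction l with
  | nil => intro _; left; exact List.prod_nil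
  | cons E t ih =>
    intro hmem
    have hE := idem_struct hloc E (hmem E List.mem_cons_self)
    have ht := ih (fun F hF => hmem F (List.mem_cons_of_mem E hF))
    rw [List.prod_cons]
    rcases hE with rfl | ⟨c, r, hcr⟩
    · rcases ht with h1 | ⟨c, r, hcr⟩
      · left; rw [h1, one_mul]
      · right; exact ⟨c, r, fun i j => by rw [one_mul]; exact hcr i j⟩
    · right
      rcases ht with h1 | ⟨c', r', hcr'⟩
      · exact ⟨c, r, fun i j => by rw [h1, mul_one]; exact hcr i j⟩
      · refine ⟨c, fun j => (r 0 * c' 0 + r 1 * c' 1) * r' j, fun i j => ?_⟩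
        rw [Matrix.mul_apply, Fin.sum_univ_two, hcr i 0, hcr i 1, hcr' 0 j, hcr' 1 j]
        noncomm_ring

end LocalAux

/-- If `R` is a local ring (not necessarily commutative) in which every right
singular `2 × 2` matrix is a product of idempotent matrices, then `R` is a
domain. -/
theorem isDomain_of_localRing_rightSingular_prod_idempotents
    (R : Type*) [Ring R] [Nontrivial R]
    (hloc : ∀ a b : R, a + b = 1 → IsUnit a ∨ IsUnit b)
    (h : ∀ A : Matrix (Fin 2) (Fin 2) R,
      (∃ B : Matrix (Fin 2) (Fin 2) R, B ≠ 0 ∧ A * B = 0) →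
      ∃ l : List (Matrix (Fin 2) (Fin 2) R), (∀ E ∈ l, E * E = E) ∧ A = l.prod) :
    ∀ a b : R, a * b = 0 → a = 0 ∨ b = 0 := by
  intro a b hab
  by_cases hb : b = 0
  · exact Or.inr hb
  · left
    by_contra ha
    have hB : (Matrix.of ![![(0 : R), 0], ![0, b]]) ≠ 0 := by
      intro h0
      apply hb
      have := congrFun (congrFun h0 1) 1
      simpa using this
    have hAB : (Matrix.of ![![(1 : R), 0], ![0, a]]) * (Matrix.of ![![(0 : R), 0], ![0, b]]) = 0 := by
      ext i j
      rw [Matrix.mul_apply, Fin.sum_univ_two]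
      fin_cases i <;> fin_cases j <;> simp [hab]
    obtain ⟨l, hidem, hA⟩ := h _ ⟨_, hB, hAB⟩
    rcases prod_struct hloc l hidem with h1 | ⟨c, r, hcr⟩
    · rw [h1] at hA
      have ha1 : a = 1 := by
        have := congrFun (congrFun hA 1) 1
        simpa using this
      exact hb (by rw [← hab, ha1, one_mul])
    · rw [← hA] at hcr
      have e00 : (1 : R) = c 0 * r 0 := by simpa using hcr 0 0
      have e10 : (0 : R) = c 1 * r 0 := by simpa using hcr 1 0
      have e11 : a = c 1 * r 1 := by simpa using hcr 1 1
      have hrc : r 0 * c 0 = 1 := loc_inv_comm hloc e00.symm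
      have hc1 : c 1 = 0 := by
        calc c 1 = c 1 * (r 0 * c 0) := by rw [hrc, mul_one]
          _ = (c 1 * r 0) * c 0 := by rw [mul_assoc]
          _ = 0 := by rw [← e10, zero_mul]
      exact ha (by rw [e11, hc1, zero_mul])
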